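/- arXiv:2309.15774 — 3 statements merged into one kernel-verified Lean document; each statement's English description precedes it below -/
import Mathlib

section
/- The set I of quaternions consisting of all quaternions whose coordinate vector (a,b,c,d) (for a + bi + cj + dk) is obtained by an even permutation of the four coordinates from one of the vectors (±1,0,0,0), (±1/2,±1/2,±1/2,±1/2), or (0,±1/2,±φ/2,±Φ/2) (all sign choices independent) has exactly 120 elements. -/
noncomputable section

open scoped Quaternion

/-- The little golden ratio. -/
def φ : ℝ := (Real.sqrt 5 - 1) / 2

/-- The big golden ratio. -/
def Φ : ℝ := (Real.sqrt 5 + 1) / 2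

/-- A real number is a sign if it is `1` or `-1`. -/
def IsSign (s : ℝ) : Prop := s = 1 ∨ s = -1

/-- The coordinate vector of a quaternion `a + bi + cj + dk`. -/
def coords (q : ℍ[ℝ]) : Fin 4 → ℝ := ![q.re, q.imI, q.imJ, q.imK]

/-- The base coordinate vectors `(±1,0,0,0)`, `(±1/2,±1/2,±1/2,±1/2)`, `(0,±1/2,±φ/2,±Φ/2)`. -/
def baseVectors : Set (Fin 4 → ℝ) :=
  {v | (∃ s, IsSign s ∧ v = ![s, 0, 0, 0]) ∨
       (∃ s₀ s₁ s₂ s₃, IsSign s₀ ∧ IsSign s₁ ∧ IsSign s₂ ∧ IsSign s₃ ∧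
          v = ![s₀ / 2, s₁ / 2, s₂ / 2, s₃ / 2]) ∨
       (∃ s₁ s₂ s₃, IsSign s₁ ∧ IsSign s₂ ∧ IsSign s₃ ∧
          v = ![0, s₁ / 2, s₂ * φ / 2, s₃ * Φ / 2])}

/-- The binary icosahedral group: quaternions whose coordinate vector is obtained from a base
vector by an even permutation of the four coordinates. -/
def binaryIcosahedral : Set ℍ[ℝ] :=
  {q | ∃ v ∈ baseVectors, ∃ σ : Equiv.Perm (Fin 4),
        σ ∈ alternatingGroup (Fin 4) ∧ coords q = v ∘ σ}

/-! ### Auxiliary integer model -/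

/-- decode an integer pair `(p, q)` as `(p + q √5)/4`. -/
def gdec (p : ℤ × ℤ) : ℝ := ((p.1 : ℝ) + (p.2 : ℝ) * Real.sqrt 5) / 4

def Gdec (w : Fin 4 → ℤ × ℤ) : Fin 4 → ℝ := fun i => gdec (w i)

def Fmap (w : Fin 4 → ℤ × ℤ) : ℍ[ℝ] := ⟨gdec (w 0), gdec (w 1), gdec (w 2), gdec (w 3)⟩

def Sgn : Finset ℤ := {1, -1}

def Bint : Finset (Fin 4 → ℤ × ℤ) :=
  Sgn.image (fun s => ![(4*s,0),(0,0),(0,0),(0,0)]) ∪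
  (Sgn ×ˢ Sgn ×ˢ Sgn ×ˢ Sgn).image
    (fun s => ![(2*s.1,0),(2*s.2.1,0),(2*s.2.2.1,0),(2*s.2.2.2,0)]) ∪
  (Sgn ×ˢ Sgn ×ˢ Sgn).image
    (fun s => ![(0,0),(2*s.1,0),(-s.2.1,s.2.1),(s.2.2,s.2.2)])

def A4 : Finset (Equiv.Perm (Fin 4)) := Finset.univ.filter (fun σ => Equiv.Perm.sign σ = 1)

def Fset : Finset (Fin 4 → ℤ × ℤ) := (Bint ×ˢ A4).image (fun p => p.1 ∘ p.2)

lemma irr5 : Irrational (Real.sqrt 5) := by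
  simpa using (Nat.prime_five).irrational_sqrt

lemma gdec_inj : Function.Injective gdec := by
  intro p q h
  unfold gdec at h
  have h4 : (p.1 : ℝ) + p.2 * Real.sqrt 5 = q.1 + q.2 * Real.sqrt 5 := by linarith
  have h2 : p.2 = q.2 := by
    by_contra hne
    have hd : (p.2 : ℝ) - q.2 ≠ 0 := sub_ne_zero.mpr (by exact_mod_cast hne)
    have hs : Real.sqrt 5 = ((q.1 : ℝ) - p.1) / ((p.2 : ℝ) - q.2) := by
      field_simp
      linarith
    exact irr5 ⟨((q.1 : ℚ) - p.1) / ((p.2 : ℚ) - q.2), by push_cast; exact hs.symm⟩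
  have h1 : p.1 = q.1 := by
    have : (p.1 : ℝ) = q.1 := by rw [h2] at h4; linarith
    exact_mod_cast this
  exact Prod.ext h1 h2

lemma Fmap_inj : Function.Injective Fmap := by
  intro w w' h
  have h0 := congrArg QuaternionAlgebra.re h
  have h1 := congrArg QuaternionAlgebra.imI h
  have h2 := congrArg QuaternionAlgebra.imJ h
  have h3 := congrArg QuaternionAlgebra.imK h
  funext i
  fin_cases i
  exacts [gdec_inj h0, gdec_inj h1, gdec_inj h2, gdec_inj h3]

lemma Gdec1 (s : ℤ) :
    Gdec ![(4*s,0),(0,0),(0,0),(0,0)] = ![(s:ℝ), 0, 0, 0] := by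
  funext i; fin_cases i <;> simp [Gdec, gdec, φ, Φ] <;> push_cast <;> ring

lemma Gdec2 (s₀ s₁ s₂ s₃ : ℤ) :
    Gdec ![(2*s₀,0),(2*s₁,0),(2*s₂,0),(2*s₃,0)] =
      ![(s₀:ℝ)/2, (s₁:ℝ)/2, (s₂:ℝ)/2, (s₃:ℝ)/2] := by
  funext i; fin_cases i <;> simp [Gdec, gdec, φ, Φ] <;> push_cast <;> ring

lemma Gdec3 (s₁ s₂ s₃ : ℤ) :
    Gdec ![(0,0),(2*s₁,0),(-s₂,s₂),(s₃,s₃)] =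
      ![0, (s₁:ℝ)/2, (s₂:ℝ) * φ / 2, (s₃:ℝ) * Φ / 2] := by
  funext i; fin_cases i <;> simp [Gdec, gdec, φ, Φ] <;> push_cast <;> ring

lemma sign_of_real {s : ℝ} (h : IsSign s) :
    ∃ t : ℤ, (t = 1 ∨ t = -1) ∧ ((t : ℝ)) = s := by
  rcases h with rfl | rfl
  exacts [⟨1, Or.inl rfl, by norm_num⟩, ⟨-1, Or.inr rfl, by norm_num⟩]

lemma isSign_cast {t : ℤ} (h : t = 1 ∨ t = -1) : IsSign ((t : ℝ)) := by
  rcases h with rfl | rfl <;> [left; right] <;> norm_num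

lemma baseA : baseVectors = Gdec '' ↑Bint := by
  ext v
  constructor
  · rintro (⟨s, hs, rfl⟩ | ⟨s₀, s₁, s₂, s₃, h₀, h₁, h₂, h₃, rfl⟩ | ⟨s₁, s₂, s₃, h₁, h₂, h₃, rfl⟩)
    · obtain ⟨t, ht, rfl⟩ := sign_of_real hs
      refine ⟨![(4*t,0),(0,0),(0,0),(0,0)], ?_, Gdec1 t⟩
      simp only [Bint, Finset.coe_union, Set.mem_union, Finset.coe_image, Set.mem_image,
        Finset.mem_coe]
      exact Or.inl (Or.inl ⟨t, by simp [Sgn]; tauto, rfl⟩)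
    · obtain ⟨t₀, ht₀, rfl⟩ := sign_of_real h₀
      obtain ⟨t₁, ht₁, rfl⟩ := sign_of_real h₁
      obtain ⟨t₂, ht₂, rfl⟩ := sign_of_real h₂
      obtain ⟨t₃, ht₃, rfl⟩ := sign_of_real h₃
      refine ⟨![(2*t₀,0),(2*t₁,0),(2*t₂,0),(2*t₃,0)], ?_, Gdec2 t₀ t₁ t₂ t₃⟩
      simp only [Bint, Finset.coe_union, Set.mem_union, Finset.coe_image, Set.mem_image,
        Finset.mem_coe]
      exact Or.inl (Or.inr ⟨(t₀, t₁, t₂, t₃), by simp [Sgn, Finset.mem_product]; tauto, rfl⟩)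
    · obtain ⟨t₁, ht₁, rfl⟩ := sign_of_real h₁
      obtain ⟨t₂, ht₂, rfl⟩ := sign_of_real h₂
      obtain ⟨t₃, ht₃, rfl⟩ := sign_of_real h₃
      refine ⟨![(0,0),(2*t₁,0),(-t₂,t₂),(t₃,t₃)], ?_, Gdec3 t₁ t₂ t₃⟩
      simp only [Bint, Finset.coe_union, Set.mem_union, Finset.coe_image, Set.mem_image,
        Finset.mem_coe]
      exact Or.inr ⟨(t₁, t₂, t₃), by simp [Sgn, Finset.mem_product]; tauto, rfl⟩
  · rintro ⟨w, hw, rfl⟩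
    simp only [Finset.mem_coe, Bint, Finset.mem_union, Finset.mem_image,
      Finset.mem_product, Sgn, Finset.mem_insert, Finset.mem_singleton] at hw
    rcases hw with (⟨t, ht, rfl⟩ | ⟨t, ht, rfl⟩) | ⟨t, ht, rfl⟩
    · exact Or.inl ⟨(t:ℝ), isSign_cast ht, Gdec1 t⟩
    · refine Or.inr (Or.inl ⟨(t.1:ℝ), (t.2.1:ℝ), (t.2.2.1:ℝ), (t.2.2.2:ℝ),
        isSign_cast ht.1, isSign_cast ht.2.1, isSign_cast ht.2.2.1, isSign_cast ht.2.2.2,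
        Gdec2 _ _ _ _⟩)
    · exact Or.inr (Or.inr ⟨(t.1:ℝ), (t.2.1:ℝ), (t.2.2:ℝ),
        isSign_cast ht.1, isSign_cast ht.2.1, isSign_cast ht.2.2, Gdec3 _ _ _⟩)

lemma coords_Fmap (u : Fin 4 → ℤ × ℤ) : coords (Fmap u) = Gdec u := by
  funext i; fin_cases i <;> rfl

lemma eq_Fmap {q : ℍ[ℝ]} {u : Fin 4 → ℤ × ℤ} (h : coords q = Gdec u) : q = Fmap u := by
  have h0 := congrFun h 0
  have h1 := congrFun h 1
  have h2 := congrFun h 2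
  have h3 := congrFun h 3
  exact QuaternionAlgebra.ext h0 h1 h2 h3

lemma key : binaryIcosahedral = Fmap '' ↑Fset := by
  ext q
  constructor
  · rintro ⟨v, hv, σ, hσ, hq⟩
    rw [baseA] at hv
    obtain ⟨w, hwB, rfl⟩ := hv
    refine ⟨w ∘ σ, ?_, (eq_Fmap (u := w ∘ σ) hq).symm⟩
    simp only [Fset, Finset.coe_image, Set.mem_image, Finset.mem_coe, Finset.mem_product]
    refine ⟨(w, σ), ⟨hwB, ?_⟩, rfl⟩
    simpa [A4] using (Equiv.Perm.mem_alternatingGroup.mp hσ)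
  · rintro ⟨u, hu, rfl⟩
    simp only [Finset.mem_coe, Fset, Finset.mem_image, Finset.mem_product, A4,
      Finset.mem_filter, Finset.mem_univ, true_and] at hu
    obtain ⟨⟨w, σ⟩, ⟨hwB, hσ⟩, rfl⟩ := hu
    exact ⟨Gdec w, by rw [baseA]; exact ⟨w, hwB, rfl⟩, σ,
      Equiv.Perm.mem_alternatingGroup.mpr hσ, coords_Fmap _⟩

set_option maxRecDepth 40000 in
lemma Fset_card : Fset.card = 120 := by decide

theorem stmt0 : Set.ncard binaryIcosahedral = 120 := by
  rw [key, Set.ncard_image_of_injective _ Fmap_inj, Set.ncard_coe_finset, Fset_card]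
end
end

section
/- The golden ratio Φ = (√5 + 1)/2, regarded as a real quaternion, is an icosian; consequently the icosian ring 𝕀 is closed under multiplication by Φ and by φ = Φ − 1, and in particular φ·q ∈ 𝕀 for every q ∈ I. -/
noncomputable section

open scoped Quaternion

/-- The icosian ring: the additive subgroup of the quaternions generated by the binary
icosahedral group. -/
def icosians : AddSubgroup ℍ[ℝ] := AddSubgroup.closure binaryIcosahedral

/-! ### Auxiliary material -/

lemma sqrt5_sq : Real.sqrt 5 * Real.sqrt 5 = 5 := Real.mul_self_sqrt (by norm_num)

lemma Phi_eq : Φ = φ + 1 := by unfold φ Φ; ring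

lemma phi_sq : φ * φ = 1 - φ := by
  unfold φ; linear_combination (1/4 : ℝ) * sqrt5_sq

lemma isSign_one : IsSign 1 := Or.inl rfl

lemma IsSign.neg {s : ℝ} (hs : IsSign s) : IsSign (-s) := by
  rcases hs with h | h <;> simp [IsSign, h]

/-- Build a quaternion from a coordinate vector. -/
def ofCoords (v : Fin 4 → ℝ) : ℍ[ℝ] := ⟨v 0, v 1, v 2, v 3⟩

lemma coords_ofCoords (v : Fin 4 → ℝ) : coords (ofCoords v) = v := by
  funext i; fin_cases i <;> rfl

lemma ofCoords_add (f g : Fin 4 → ℝ) : ofCoords (f + g) = ofCoords f + ofCoords g := by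
  ext <;> simp [ofCoords] <;> rfl

/-- Concrete even permutations used in the decompositions. -/
def pA : Equiv.Perm (Fin 4) := Equiv.mk ![3,2,1,0] ![3,2,1,0] (by decide) (by decide)
def pB : Equiv.Perm (Fin 4) := Equiv.mk ![0,3,1,2] ![0,2,3,1] (by decide) (by decide)
def pC : Equiv.Perm (Fin 4) := Equiv.mk ![3,0,2,1] ![1,3,2,0] (by decide) (by decide)
def pD : Equiv.Perm (Fin 4) := Equiv.mk ![1,2,0,3] ![2,0,1,3] (by decide) (by decide)
def pE : Equiv.Perm (Fin 4) := Equiv.mk ![0,2,3,1] ![0,3,1,2] (by decide) (by decide)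

lemma pA_mem : pA ∈ alternatingGroup (Fin 4) := by
  rw [Equiv.Perm.mem_alternatingGroup]; decide
lemma pB_mem : pB ∈ alternatingGroup (Fin 4) := by
  rw [Equiv.Perm.mem_alternatingGroup]; decide
lemma pC_mem : pC ∈ alternatingGroup (Fin 4) := by
  rw [Equiv.Perm.mem_alternatingGroup]; decide
lemma pD_mem : pD ∈ alternatingGroup (Fin 4) := by
  rw [Equiv.Perm.mem_alternatingGroup]; decide
lemma pE_mem : pE ∈ alternatingGroup (Fin 4) := by
  rw [Equiv.Perm.mem_alternatingGroup]; decide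

/-- A base vector composed with two even permutations gives an icosian. -/
lemma gen_mem {b : Fin 4 → ℝ} (hb : b ∈ baseVectors) {τ σ : Equiv.Perm (Fin 4)}
    (hτ : τ ∈ alternatingGroup (Fin 4)) (hσ : σ ∈ alternatingGroup (Fin 4)) :
    ofCoords ((b ∘ ⇑τ) ∘ ⇑σ) ∈ icosians := by
  apply AddSubgroup.subset_closure
  exact ⟨b, hb, τ * σ, mul_mem hτ hσ, by rw [coords_ofCoords]; rfl⟩

/-- Key lemma: multiplying a binary icosahedral element by `φ` stays in the icosian ring. -/
lemma key_s5 {q : ℍ[ℝ]} (hq : q ∈ binaryIcosahedral) : ((φ : ℝ) : ℍ[ℝ]) * q ∈ icosians := by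
  obtain ⟨v, hv, σ, hσ, hcoords⟩ := hq
  have h0 : q.re = v (σ 0) := congrFun hcoords 0
  have h1 : q.imI = v (σ 1) := congrFun hcoords 1
  have h2 : q.imJ = v (σ 2) := congrFun hcoords 2
  have h3 : q.imK = v (σ 3) := congrFun hcoords 3
  have main : ∀ w₁ w₂ w₃ : Fin 4 → ℝ,
      (∀ i, φ * v i = w₁ i + w₂ i + w₃ i) →
      ofCoords (w₁ ∘ ⇑σ) ∈ icosians → ofCoords (w₂ ∘ ⇑σ) ∈ icosians →
      ofCoords (w₃ ∘ ⇑σ) ∈ icosians → ((φ : ℝ) : ℍ[ℝ]) * q ∈ icosians := by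
    intro w₁ w₂ w₃ hdec m₁ m₂ m₃
    have hofq : ((φ : ℝ) : ℍ[ℝ]) * q = ofCoords (fun i => φ * v (σ i)) := by
      ext <;> simp [ofCoords, h0, h1, h2, h3]
    have hvec : (fun i => φ * v (σ i)) = (w₁ ∘ ⇑σ) + ((w₂ ∘ ⇑σ) + (w₃ ∘ ⇑σ)) :=
      funext fun i => by rw [Pi.add_apply, Pi.add_apply, Function.comp_apply,
        Function.comp_apply, Function.comp_apply, hdec (σ i), add_assoc]
    rw [hofq, hvec, ofCoords_add, ofCoords_add]
    exact add_mem m₁ (add_mem m₂ m₃)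
  rcases hv with ⟨s, hs, rfl⟩ | ⟨s₀, s₁, s₂, s₃, hs₀, hs₁, hs₂, hs₃, rfl⟩ |
      ⟨s₁, s₂, s₃, hs₁, hs₂, hs₃, rfl⟩
  · -- v = ![s, 0, 0, 0]
    refine main ((![0, s/2, s*φ/2, s*Φ/2]) ∘ ⇑pA)
      ((![0, (-s)/2, (-s)*φ/2, s*Φ/2]) ∘ ⇑pA)
      ((![-s, 0, 0, 0]) ∘ ⇑(1 : Equiv.Perm (Fin 4))) ?_ ?_ ?_ ?_
    · intro i
      fin_cases i <;>
        simp [pA, Function.comp] <;>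
        first
          | ring1
          | linear_combination (-s) * Phi_eq
          | linear_combination s * Phi_eq
    · exact gen_mem (Or.inr (Or.inr ⟨s, s, s, hs, hs, hs, rfl⟩)) pA_mem hσ
    · exact gen_mem (Or.inr (Or.inr ⟨-s, -s, s, hs.neg, hs.neg, hs, rfl⟩)) pA_mem hσ
    · exact gen_mem (Or.inl ⟨-s, hs.neg, rfl⟩) (one_mem _) hσ
  · -- v = ![s₀/2, s₁/2, s₂/2, s₃/2]
    refine main ((![0, s₂/2, s₃*φ/2, s₁*Φ/2]) ∘ ⇑pB)
      ((![0, s₃/2, s₂*φ/2, s₀*Φ/2]) ∘ ⇑pC)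
      ((![(-s₀)/2, (-s₁)/2, (-s₂)/2, (-s₃)/2]) ∘ ⇑(1 : Equiv.Perm (Fin 4))) ?_ ?_ ?_ ?_
    · intro i
      fin_cases i <;>
        simp [pB, pC, Function.comp] <;>
        first
          | ring1
          | linear_combination (-s₀/2) * Phi_eq
          | linear_combination (s₀/2) * Phi_eq
          | linear_combination (-s₁/2) * Phi_eq
          | linear_combination (s₁/2) * Phi_eq
    · exact gen_mem (Or.inr (Or.inr ⟨s₂, s₃, s₁, hs₂, hs₃, hs₁, rfl⟩)) pB_mem hσ
    · exact gen_mem (Or.inr (Or.inr ⟨s₃, s₂, s₀, hs₃, hs₂, hs₀, rfl⟩)) pC_mem hσ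
    · exact gen_mem (Or.inr (Or.inl ⟨-s₀, -s₁, -s₂, -s₃, hs₀.neg, hs₁.neg, hs₂.neg, hs₃.neg,
        rfl⟩)) (one_mem _) hσ
  · -- v = ![0, s₁/2, s₂*φ/2, s₃*Φ/2]
    have hz : ofCoords ((0 : Fin 4 → ℝ) ∘ ⇑σ) = 0 := by ext <;> simp [ofCoords]
    refine main ((![s₂, 0, 0, 0]) ∘ ⇑pD)
      ((![0, s₃/2, s₁*φ/2, (-s₂)*Φ/2]) ∘ ⇑pE)
      (0 : Fin 4 → ℝ) ?_ ?_ ?_ ?_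
    · intro i
      fin_cases i <;>
        simp [pD, pE, Function.comp] <;>
        first
          | ring1
          | linear_combination (s₂/2) * phi_sq + (s₂/2) * Phi_eq
          | linear_combination (-s₂/2) * phi_sq + (-s₂/2) * Phi_eq
          | linear_combination (s₃/2) * phi_sq + (s₃*φ/2) * Phi_eq
          | linear_combination (-s₃/2) * phi_sq + (-(s₃*φ)/2) * Phi_eq
    · exact gen_mem (Or.inl ⟨s₂, hs₂, rfl⟩) pD_mem hσ
    · exact gen_mem (Or.inr (Or.inr ⟨s₃, s₁, -s₂, hs₃, hs₁, hs₂.neg, rfl⟩)) pE_mem hσ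
    · rw [hz]; exact zero_mem _

lemma one_mem_bi : (1 : ℍ[ℝ]) ∈ binaryIcosahedral := by
  refine ⟨![1, 0, 0, 0], Or.inl ⟨1, isSign_one, rfl⟩, 1, one_mem _, ?_⟩
  funext i; fin_cases i <;> simp [coords]

lemma phi_mul_mem {q : ℍ[ℝ]} (hq : q ∈ icosians) : ((φ : ℝ) : ℍ[ℝ]) * q ∈ icosians := by
  induction hq using AddSubgroup.closure_induction with
  | mem x hx => exact key_s5 hx
  | zero => simpa using zero_mem icosians
  | add x y _ _ hx hy => rw [mul_add]; exact add_mem hx hy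
  | neg x _ hx => rw [mul_neg]; exact neg_mem hx

lemma Phi_mul_mem {q : ℍ[ℝ]} (hq : q ∈ icosians) : ((Φ : ℝ) : ℍ[ℝ]) * q ∈ icosians := by
  have : ((Φ : ℝ) : ℍ[ℝ]) * q = ((φ : ℝ) : ℍ[ℝ]) * q + q := by
    rw [Phi_eq]; push_cast; rw [add_mul, one_mul]
  rw [this]
  exact add_mem (phi_mul_mem hq) hq

theorem stmt5 :
    ((Φ : ℝ) : ℍ[ℝ]) ∈ icosians ∧
    (∀ q ∈ icosians, ((Φ : ℝ) : ℍ[ℝ]) * q ∈ icosians) ∧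
    (∀ q ∈ icosians, ((φ : ℝ) : ℍ[ℝ]) * q ∈ icosians) ∧
    (∀ q ∈ binaryIcosahedral, ((φ : ℝ) : ℍ[ℝ]) * q ∈ icosians) := by
  refine ⟨?_, fun q hq => Phi_mul_mem hq, fun q hq => phi_mul_mem hq, fun q hq => key_s5 hq⟩
  have h1 : (1 : ℍ[ℝ]) ∈ icosians := AddSubgroup.subset_closure one_mem_bi
  simpa using Phi_mul_mem h1
end
end

section
/- There exists an isomorphism of additive groups g from the group 𝕀₀ of pure imaginary icosians onto the D₆ lattice L₆ ⊂ ℝ⁶ such that for every q ∈ 𝕀₀ the Euclidean norm satisfies ‖g(q)‖² = 2·|q|², where |q|² is the Conway–Sloane norm. In other words, the pure imaginary icosians equipped with the Conway–Soane norm are isometric to a rescaled copy of the D₆ lattice. -/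
noncomputable section

open scoped Quaternion

/-- The squared quaternionic norm `a² + b² + c² + d²`. -/
def nsq (q : ℍ[ℝ]) : ℝ := q.re ^ 2 + q.imI ^ 2 + q.imJ ^ 2 + q.imK ^ 2

/-- The Conway–Sloane norm of an icosian: writing its quaternionic norm `‖q‖²` as `x + y√5`
with `x, y` rational, the Conway–Sloane norm is `|q|² = x + y`. -/
def csNorm (q : ℍ[ℝ]) : ℚ := by
  classical
  exact if h : ∃ p : ℚ × ℚ, nsq q = (p.1 : ℝ) + (p.2 : ℝ) * Real.sqrt 5
    then h.choose.1 + h.choose.2 else 0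

/-- The pure imaginary icosians. -/
def pureIcosians : Set ℍ[ℝ] := {q | q ∈ icosians ∧ q.re = 0}

/-- The `D₆` lattice in `ℝ⁶`. -/
def D6 : Set (Fin 6 → ℝ) :=
  {x | (∀ i, ∃ n : ℤ, x i = n) ∧ ∃ m : ℤ, ∑ i, x i = 2 * m}

lemma rep_unique {a b c d : ℚ} (h : (a:ℝ) + b * Real.sqrt 5 = c + d * Real.sqrt 5) :
    a = c ∧ b = d := by
  by_cases hbd : b = d
  · subst hbd
    have : (a:ℝ) = c := by linarith
    exact ⟨by exact_mod_cast this, rfl⟩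
  · exfalso
    have hne : ((d:ℝ) - b) ≠ 0 := by
      intro hh
      apply hbd
      have hbd' : (b:ℝ) = (d:ℝ) := by linarith
      exact_mod_cast hbd'
    have h5 : Real.sqrt 5 = (((a - c) / (d - b) : ℚ) : ℝ) := by
      push_cast
      rw [eq_div_iff hne]
      linarith
    exact irr5 ⟨_, h5.symm⟩

def extQ (r : ℝ) : ℚ × ℚ := by
  classical
  exact if h : ∃ p : ℚ × ℚ, r = (p.1 : ℝ) + (p.2 : ℝ) * Real.sqrt 5 then h.choose else 0

lemma extQ_eq {r : ℝ} {a b : ℚ} (h : r = (a:ℝ) + (b:ℝ) * Real.sqrt 5) : extQ r = (a, b) := by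
  classical
  have hex : ∃ p : ℚ × ℚ, r = (p.1 : ℝ) + (p.2 : ℝ) * Real.sqrt 5 := ⟨(a,b), h⟩
  rw [extQ]
  rw [dif_pos hex]
  have h2 := hex.choose_spec
  have h3 := rep_unique (h2.symm.trans h)
  exact Prod.ext h3.1 h3.2

lemma csNorm_eq {q : ℍ[ℝ]} {a b : ℚ} (h : nsq q = (a:ℝ) + (b:ℝ) * Real.sqrt 5) :
    csNorm q = a + b := by
  classical
  have hex : ∃ p : ℚ × ℚ, nsq q = (p.1 : ℝ) + (p.2 : ℝ) * Real.sqrt 5 := ⟨(a,b), h⟩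
  rw [csNorm]
  rw [dif_pos hex]
  have h2 := hex.choose_spec
  have h3 := rep_unique (h2.symm.trans h)
  rw [h3.1, h3.2]

def Cond (x0 y0 x1 y1 x2 y2 x3 y3 : ℤ) : Prop :=
  (x0+y0) % 2 = 0 ∧ (x1+y1) % 2 = 0 ∧ (x2+y2) % 2 = 0 ∧ (x3+y3) % 2 = 0 ∧
  (x0+x1+x2+x3) % 2 = 0 ∧
  (2*y1 + x2 + 3*y2 + x3 + y3) % 4 = 0 ∧
  (x1 + y1 + 2*y2 + x3 + 3*y3) % 4 = 0 ∧
  (x0 + y0 + x2 + 3*y2 + 2*y3) % 4 = 0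
def Mset : AddSubgroup ℍ[ℝ] where
  carrier := {q | ∃ x0 y0 x1 y1 x2 y2 x3 y3 : ℤ, Cond x0 y0 x1 y1 x2 y2 x3 y3 ∧
    q.re = ((x0:ℝ) + (y0:ℝ) * Real.sqrt 5)/4 ∧ q.imI = ((x1:ℝ) + (y1:ℝ) * Real.sqrt 5)/4 ∧
    q.imJ = ((x2:ℝ) + (y2:ℝ) * Real.sqrt 5)/4 ∧ q.imK = ((x3:ℝ) + (y3:ℝ) * Real.sqrt 5)/4}
  zero_mem' := ⟨0,0,0,0,0,0,0,0, by unfold Cond; omega, by simp, by simp, by simp, by simp⟩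
  add_mem' := by
    rintro a b ⟨x0,y0,x1,y1,x2,y2,x3,y3,hc,h0,h1,h2,h3⟩ ⟨u0,v0,u1,v1,u2,v2,u3,v3,hc',g0,g1,g2,g3⟩
    refine ⟨x0+u0,y0+v0,x1+u1,y1+v1,x2+u2,y2+v2,x3+u3,y3+v3, ?_, ?_, ?_, ?_, ?_⟩
    · unfold Cond at *; omega
    all_goals simp only [Quaternion.re_add, Quaternion.imI_add, Quaternion.imJ_add,
        Quaternion.imK_add, h0,h1,h2,h3,g0,g1,g2,g3]
    all_goals push_cast; ring
  neg_mem' := by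
    rintro a ⟨x0,y0,x1,y1,x2,y2,x3,y3,hc,h0,h1,h2,h3⟩
    refine ⟨-x0,-y0,-x1,-y1,-x2,-y2,-x3,-y3, ?_, ?_, ?_, ?_, ?_⟩
    · unfold Cond at *; omega
    all_goals simp only [Quaternion.re_neg, Quaternion.imI_neg, Quaternion.imJ_neg,
        Quaternion.imK_neg, h0,h1,h2,h3]
    all_goals push_cast; ring

lemma mem_M (q : ℍ[ℝ]) (x0 y0 x1 y1 x2 y2 x3 y3 : ℤ) (hc : Cond x0 y0 x1 y1 x2 y2 x3 y3)
    (h0 : q.re = ((x0:ℝ) + (y0:ℝ) * Real.sqrt 5)/4)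
    (h1 : q.imI = ((x1:ℝ) + (y1:ℝ) * Real.sqrt 5)/4)
    (h2 : q.imJ = ((x2:ℝ) + (y2:ℝ) * Real.sqrt 5)/4)
    (h3 : q.imK = ((x3:ℝ) + (y3:ℝ) * Real.sqrt 5)/4) : q ∈ Mset :=
  ⟨x0,y0,x1,y1,x2,y2,x3,y3,hc,h0,h1,h2,h3⟩

lemma perm12 (σ : Equiv.Perm (Fin 4)) (h : Equiv.Perm.sign σ = 1) :
    (σ 0 = 0 ∧ σ 1 = 1 ∧ σ 2 = 2 ∧ σ 3 = 3) ∨ (σ 0 = 0 ∧ σ 1 = 2 ∧ σ 2 = 3 ∧ σ 3 = 1) ∨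
    (σ 0 = 0 ∧ σ 1 = 3 ∧ σ 2 = 1 ∧ σ 3 = 2) ∨ (σ 0 = 1 ∧ σ 1 = 0 ∧ σ 2 = 3 ∧ σ 3 = 2) ∨
    (σ 0 = 1 ∧ σ 1 = 2 ∧ σ 2 = 0 ∧ σ 3 = 3) ∨ (σ 0 = 1 ∧ σ 1 = 3 ∧ σ 2 = 2 ∧ σ 3 = 0) ∨
    (σ 0 = 2 ∧ σ 1 = 0 ∧ σ 2 = 1 ∧ σ 3 = 3) ∨ (σ 0 = 2 ∧ σ 1 = 1 ∧ σ 2 = 3 ∧ σ 3 = 0) ∨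
    (σ 0 = 2 ∧ σ 1 = 3 ∧ σ 2 = 0 ∧ σ 3 = 1) ∨ (σ 0 = 3 ∧ σ 1 = 0 ∧ σ 2 = 2 ∧ σ 3 = 1) ∨
    (σ 0 = 3 ∧ σ 1 = 1 ∧ σ 2 = 0 ∧ σ 3 = 2) ∨ (σ 0 = 3 ∧ σ 1 = 2 ∧ σ 2 = 1 ∧ σ 3 = 0) := by
  revert h; revert σ; decide

lemma sign_int {s : ℝ} (hs : IsSign s) : ∃ t : ℤ, (t = 1 ∨ t = -1) ∧ s = (t:ℝ) := by
  rcases hs with rfl | rfl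
  · exact ⟨1, Or.inl rfl, by norm_num⟩
  · exact ⟨-1, Or.inr rfl, by norm_num⟩

set_option maxHeartbeats 2000000 in
lemma bin_sub_M : binaryIcosahedral ⊆ (Mset : Set ℍ[ℝ]) := by
  rintro q ⟨v, hv, σ, hσ, hc⟩
  have h12 := perm12 σ (Equiv.Perm.mem_alternatingGroup.mp hσ)
  have h0 := congrFun hc 0
  have h1 := congrFun hc 1
  have h2 := congrFun hc 2
  have h3 := congrFun hc 3
  simp only [coords, Function.comp_apply, Matrix.cons_val_zero, Matrix.cons_val_one,
    Matrix.head_cons, Matrix.cons_val_two, Matrix.tail_cons, Matrix.cons_val_three]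
    at h0 h1 h2 h3
  rcases hv with ⟨s, hs, rfl⟩ | ⟨s₀,s₁,s₂,s₃,hs₀,hs₁,hs₂,hs₃,rfl⟩ | ⟨s₁,s₂,s₃,hs₁,hs₂,hs₃,rfl⟩
  · -- family 1
    obtain ⟨t, ht, rfl⟩ := sign_int hs
    have hval : ∀ j : Fin 4, (![((t:ℝ)), 0, 0, 0] : Fin 4 → ℝ) j
        = (((![4*t,0,0,0] : Fin 4 → ℤ) j : ℝ) + ((0:ℤ):ℝ) * Real.sqrt 5)/4 := by
      intro j; fin_cases j <;> (simp; try ring)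
    rw [hval (σ 0)] at h0; rw [hval (σ 1)] at h1
    rw [hval (σ 2)] at h2; rw [hval (σ 3)] at h3
    refine mem_M q _ _ _ _ _ _ _ _ ?_ h0 h1 h2 h3
    have hZ : ∀ j : Fin 4, (![4*t,0,0,0] : Fin 4 → ℤ) j = 4*t ∨ (![4*t,0,0,0] : Fin 4 → ℤ) j = 0 := by
      intro j; fin_cases j <;> simp
    have z0 := hZ (σ 0); have z1 := hZ (σ 1); have z2 := hZ (σ 2); have z3 := hZ (σ 3)
    unfold Cond; omega
  · -- family 2
    obtain ⟨t₀, ht₀, rfl⟩ := sign_int hs₀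
    obtain ⟨t₁, ht₁, rfl⟩ := sign_int hs₁
    obtain ⟨t₂, ht₂, rfl⟩ := sign_int hs₂
    obtain ⟨t₃, ht₃, rfl⟩ := sign_int hs₃
    have hval : ∀ j : Fin 4, (![((t₀:ℝ))/2, (t₁:ℝ)/2, (t₂:ℝ)/2, (t₃:ℝ)/2] : Fin 4 → ℝ) j
        = (((![2*t₀,2*t₁,2*t₂,2*t₃] : Fin 4 → ℤ) j : ℝ) + ((0:ℤ):ℝ) * Real.sqrt 5)/4 := by
      intro j; fin_cases j <;> (simp; try ring)
    rw [hval (σ 0)] at h0; rw [hval (σ 1)] at h1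
    rw [hval (σ 2)] at h2; rw [hval (σ 3)] at h3
    refine mem_M q _ _ _ _ _ _ _ _ ?_ h0 h1 h2 h3
    have hZ : ∀ j : Fin 4, (![2*t₀,2*t₁,2*t₂,2*t₃] : Fin 4 → ℤ) j % 4 = 2 := by
      intro j; fin_cases j <;> simp <;> omega
    have z0 := hZ (σ 0); have z1 := hZ (σ 1); have z2 := hZ (σ 2); have z3 := hZ (σ 3)
    unfold Cond; omega
  · -- family 3
    obtain ⟨t₁, ht₁, rfl⟩ := sign_int hs₁
    obtain ⟨t₂, ht₂, rfl⟩ := sign_int hs₂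
    obtain ⟨t₃, ht₃, rfl⟩ := sign_int hs₃
    have hval : ∀ j : Fin 4, (![0, ((t₁:ℝ))/2, (t₂:ℝ) * φ / 2, (t₃:ℝ) * Φ / 2] : Fin 4 → ℝ) j
        = (((![0,2*t₁,-t₂,t₃] : Fin 4 → ℤ) j : ℝ)
           + ((![0,0,t₂,t₃] : Fin 4 → ℤ) j : ℝ) * Real.sqrt 5)/4 := by
      intro j; fin_cases j <;> (simp [φ, Φ]; try ring)
    rw [hval (σ 0)] at h0; rw [hval (σ 1)] at h1
    rw [hval (σ 2)] at h2; rw [hval (σ 3)] at h3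
    refine mem_M q _ _ _ _ _ _ _ _ ?_ h0 h1 h2 h3
    rcases h12 with ⟨e0,e1,e2,e3⟩|⟨e0,e1,e2,e3⟩|⟨e0,e1,e2,e3⟩|⟨e0,e1,e2,e3⟩|⟨e0,e1,e2,e3⟩|
      ⟨e0,e1,e2,e3⟩|⟨e0,e1,e2,e3⟩|⟨e0,e1,e2,e3⟩|⟨e0,e1,e2,e3⟩|⟨e0,e1,e2,e3⟩|⟨e0,e1,e2,e3⟩|
      ⟨e0,e1,e2,e3⟩ <;>
    simp only [e0,e1,e2,e3, Matrix.cons_val_zero, Matrix.cons_val_one, Matrix.head_cons,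
      Matrix.cons_val_two, Matrix.tail_cons, Matrix.cons_val_three] <;>
    unfold Cond <;> omega

-- ===== basis quaternions and generators =====

def τperm : Equiv.Perm (Fin 4) := ⟨![0,3,1,2], ![0,2,3,1], by decide, by decide⟩

lemma τmem : τperm ∈ alternatingGroup (Fin 4) := by
  rw [Equiv.Perm.mem_alternatingGroup]; decide

def Ga : ℍ[ℝ] := ⟨0, (-1)/2, 1*φ/2, (-1)*Φ/2⟩
def Gb : ℍ[ℝ] := ⟨0, 1*Φ/2, (-1)/2, 1*φ/2⟩
def Gc : ℍ[ℝ] := ⟨0, 1/2, (-1)*φ/2, 1*Φ/2⟩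
def Gd : ℍ[ℝ] := ⟨0, (-1)/2, (-1)*φ/2, (-1)*Φ/2⟩
def Fq2 : ℍ[ℝ] := ⟨0, (-1)*Φ/2, (-1)/2, 1*φ/2⟩
def Qi : ℍ[ℝ] := ⟨0, 1, 0, 0⟩
def Qj : ℍ[ℝ] := ⟨0, 0, 1, 0⟩
def Qk : ℍ[ℝ] := ⟨0, 0, 0, 1⟩

lemma Ga_mem : Ga ∈ binaryIcosahedral := by
  refine ⟨![0, (-1)/2, 1*φ/2, (-1)*Φ/2],
    Or.inr (Or.inr ⟨-1, 1, -1, Or.inr rfl, Or.inl rfl, Or.inr rfl, rfl⟩), 1, one_mem _, ?_⟩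
  funext i; fin_cases i <;> rfl

lemma Gc_mem : Gc ∈ binaryIcosahedral := by
  refine ⟨![0, 1/2, (-1)*φ/2, 1*Φ/2],
    Or.inr (Or.inr ⟨1, -1, 1, Or.inl rfl, Or.inr rfl, Or.inl rfl, rfl⟩), 1, one_mem _, ?_⟩
  funext i; fin_cases i <;> rfl

lemma Gd_mem : Gd ∈ binaryIcosahedral := by
  refine ⟨![0, (-1)/2, (-1)*φ/2, (-1)*Φ/2],
    Or.inr (Or.inr ⟨-1, -1, -1, Or.inr rfl, Or.inr rfl, Or.inr rfl, rfl⟩), 1, one_mem _, ?_⟩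
  funext i; fin_cases i <;> rfl

lemma Gb_mem : Gb ∈ binaryIcosahedral := by
  refine ⟨![0, (-1)/2, 1*φ/2, 1*Φ/2],
    Or.inr (Or.inr ⟨-1, 1, 1, Or.inr rfl, Or.inl rfl, Or.inl rfl, rfl⟩), τperm, τmem, ?_⟩
  funext i; fin_cases i <;> rfl

lemma Fq2_mem : Fq2 ∈ binaryIcosahedral := by
  refine ⟨![0, (-1)/2, 1*φ/2, (-1)*Φ/2],
    Or.inr (Or.inr ⟨-1, 1, -1, Or.inr rfl, Or.inl rfl, Or.inr rfl, rfl⟩), τperm, τmem, ?_⟩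
  funext i; fin_cases i <;> rfl

def σi : Equiv.Perm (Fin 4) := ⟨![1,0,3,2], ![1,0,3,2], by decide, by decide⟩
def σj : Equiv.Perm (Fin 4) := ⟨![2,3,0,1], ![2,3,0,1], by decide, by decide⟩
def σk : Equiv.Perm (Fin 4) := ⟨![3,2,1,0], ![3,2,1,0], by decide, by decide⟩

lemma Qi_mem : Qi ∈ binaryIcosahedral := by
  refine ⟨![1, 0, 0, 0], Or.inl ⟨1, Or.inl rfl, rfl⟩, σi,
    by rw [Equiv.Perm.mem_alternatingGroup]; decide, ?_⟩
  funext i; fin_cases i <;> rfl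

lemma Qj_mem : Qj ∈ binaryIcosahedral := by
  refine ⟨![1, 0, 0, 0], Or.inl ⟨1, Or.inl rfl, rfl⟩, σj,
    by rw [Equiv.Perm.mem_alternatingGroup]; decide, ?_⟩
  funext i; fin_cases i <;> rfl

lemma Qk_mem : Qk ∈ binaryIcosahedral := by
  refine ⟨![1, 0, 0, 0], Or.inl ⟨1, Or.inl rfl, rfl⟩, σk,
    by rw [Equiv.Perm.mem_alternatingGroup]; decide, ?_⟩
  funext i; fin_cases i <;> rfl

-- ===== the parameterized lattice =====

def Sp (q : ℍ[ℝ]) : Prop :=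
  ∃ n1 n2 n3 n4 n5 n6 : ℤ, q.re = 0
    ∧ q.imI = (((4*n1-n2-n4 : ℤ):ℝ) + ((-n2+n4 : ℤ):ℝ) * Real.sqrt 5)/4
    ∧ q.imJ = (((-2*n2+4*n3-3*n4+2*n6 : ℤ):ℝ) + ((n4-2*n6 : ℤ):ℝ) * Real.sqrt 5)/4
    ∧ q.imK = (((-n2-2*n4+4*n5 : ℤ):ℝ) + ((n2 : ℤ):ℝ) * Real.sqrt 5)/4

lemma sp_mem_pure {q : ℍ[ℝ]} (h : Sp q) : q ∈ pureIcosians := by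
  obtain ⟨n1,n2,n3,n4,n5,n6,h0,h1,h2,h3⟩ := h
  constructor
  · have hq : q = n1 • Qi + n2 • Fq2 + n3 • Qj + n4 • (Ga + Gb) + n5 • Qk + n6 • (Gc + Gd) := by
      ext : 1
      all_goals simp only [Quaternion.re_add, Quaternion.imI_add, Quaternion.imJ_add,
        Quaternion.imK_add, ← Int.cast_smul_eq_zsmul ℝ, Quaternion.re_smul, Quaternion.imI_smul, Quaternion.imJ_smul,
        Quaternion.imK_smul]
      all_goals simp only [Qi, Qj, Qk, Ga, Gb, Gc, Gd, Fq2, φ, Φ, h0, h1, h2, h3]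
      all_goals simp only [smul_eq_mul]
      all_goals push_cast
      all_goals ring
    rw [hq]
    refine add_mem (add_mem (add_mem (add_mem (add_mem ?_ ?_) ?_) ?_) ?_) ?_ <;>
      apply AddSubgroup.zsmul_mem
    · exact AddSubgroup.subset_closure Qi_mem
    · exact AddSubgroup.subset_closure Fq2_mem
    · exact AddSubgroup.subset_closure Qj_mem
    · exact add_mem (AddSubgroup.subset_closure Ga_mem) (AddSubgroup.subset_closure Gb_mem)
    · exact AddSubgroup.subset_closure Qk_mem
    · exact add_mem (AddSubgroup.subset_closure Gc_mem) (AddSubgroup.subset_closure Gd_mem)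
  · exact h0

lemma pure_mem_sp {q : ℍ[ℝ]} (h : q ∈ pureIcosians) : Sp q := by
  obtain ⟨hq, hre⟩ := h
  have hM : q ∈ Mset := by
    have : icosians ≤ Mset := (AddSubgroup.closure_le Mset).mpr bin_sub_M
    exact this hq
  obtain ⟨x0,y0,x1,y1,x2,y2,x3,y3,hc,h0,h1,h2,h3⟩ := hM
  -- re = 0 forces x0 = y0 = 0
  have hx0 : x0 = 0 ∧ y0 = 0 := by
    rw [hre] at h0
    have h0' : ((x0:ℚ):ℝ) + ((y0:ℚ):ℝ) * Real.sqrt 5 = ((0:ℚ):ℝ) + ((0:ℚ):ℝ) * Real.sqrt 5 := by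
      push_cast
      push_cast at h0
      linarith
    obtain ⟨e1, e2⟩ := rep_unique h0'
    exact ⟨by exact_mod_cast e1, by exact_mod_cast e2⟩
  obtain ⟨hx0', hy0'⟩ := hx0
  subst hx0'; subst hy0'
  -- divisibilities
  obtain ⟨c1,c2,c3,c4,c5,c6,c7,c8⟩ := hc
  have d1 : (4:ℤ) ∣ x1 + y1 + 2*y3 := by omega
  have d3 : (4:ℤ) ∣ 2*y1 + x2 + y2 + 4*y3 := by omega
  have d5 : (4:ℤ) ∣ 2*y1 + x3 + 3*y3 := by omega
  have d6 : (2:ℤ) ∣ y1 - y2 + y3 := by omega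
  obtain ⟨n1, hn1⟩ := d1
  obtain ⟨n3, hn3⟩ := d3
  obtain ⟨n5, hn5⟩ := d5
  obtain ⟨n6, hn6⟩ := d6
  refine ⟨n1, y3, n3, y1 + y3, n5, n6, hre, ?_, ?_, ?_⟩
  · have e1 : (x1 : ℝ) = ((4*n1 - y3 - (y1 + y3) : ℤ) : ℝ) := by
      have h : x1 = 4*n1 - y3 - (y1 + y3) := by omega
      exact_mod_cast h
    have e2 : (y1 : ℝ) = ((-y3 + (y1 + y3) : ℤ) : ℝ) := by
      have h : y1 = -y3 + (y1 + y3) := by omega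
      exact_mod_cast h
    rw [h1, e1, e2]
  · have e1 : (x2 : ℝ) = ((-2*y3 + 4*n3 - 3*(y1 + y3) + 2*n6 : ℤ) : ℝ) := by
      have h : x2 = -2*y3 + 4*n3 - 3*(y1 + y3) + 2*n6 := by omega
      exact_mod_cast h
    have e2 : (y2 : ℝ) = (((y1 + y3) - 2*n6 : ℤ) : ℝ) := by
      have h : y2 = (y1 + y3) - 2*n6 := by omega
      exact_mod_cast h
    rw [h2, e1, e2]
  · have e1 : (x3 : ℝ) = ((-y3 - 2*(y1 + y3) + 4*n5 : ℤ) : ℝ) := by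
      have h : x3 = -y3 - 2*(y1 + y3) + 4*n5 := by omega
      exact_mod_cast h
    rw [h3, e1]

-- ===== the isometry =====

lemma cons_val_five' {α : Type*} (a b c d e f : α) : (![a,b,c,d,e,f] : Fin 6 → α) 5 = f := rfl

def gvecQ (q : ℍ[ℝ]) : Fin 6 → ℚ :=
  ![ (extQ q.imI).1 + (extQ q.imI).2 + 2*(extQ q.imK).2,
     -(extQ q.imI).1 - (extQ q.imI).2 + 2*(extQ q.imK).2,
     2*(extQ q.imI).2 + (extQ q.imJ).1 + (extQ q.imJ).2,
     2*(extQ q.imI).2 - (extQ q.imJ).1 - (extQ q.imJ).2,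
     -2*(extQ q.imJ).2 + (extQ q.imK).1 + (extQ q.imK).2,
     -2*(extQ q.imJ).2 - (extQ q.imK).1 - (extQ q.imK).2 ]

def gmap (q : ℍ[ℝ]) : Fin 6 → ℝ := fun j => ((gvecQ q j : ℚ) : ℝ)

lemma gval {q : ℍ[ℝ]} {n1 n2 n3 n4 n5 n6 : ℤ}
    (h1 : q.imI = (((4*n1-n2-n4 : ℤ):ℝ) + ((-n2+n4 : ℤ):ℝ) * Real.sqrt 5)/4)
    (h2 : q.imJ = (((-2*n2+4*n3-3*n4+2*n6 : ℤ):ℝ) + ((n4-2*n6 : ℤ):ℝ) * Real.sqrt 5)/4)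
    (h3 : q.imK = (((-n2-2*n4+4*n5 : ℤ):ℝ) + ((n2 : ℤ):ℝ) * Real.sqrt 5)/4) :
    gmap q = fun j => ((![n1, n2-n1, n3-n2, n4-n3, n5+n6-n4, n6-n5] j : ℤ) : ℝ) := by
  have e1 : extQ q.imI = (((4*n1-n2-n4 : ℤ):ℚ)/4, ((-n2+n4 : ℤ):ℚ)/4) :=
    extQ_eq (by rw [h1]; push_cast; ring)
  have e2 : extQ q.imJ = (((-2*n2+4*n3-3*n4+2*n6 : ℤ):ℚ)/4, ((n4-2*n6 : ℤ):ℚ)/4) :=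
    extQ_eq (by rw [h2]; push_cast; ring)
  have e3 : extQ q.imK = (((-n2-2*n4+4*n5 : ℤ):ℚ)/4, ((n2 : ℤ):ℚ)/4) :=
    extQ_eq (by rw [h3]; push_cast; ring)
  funext j
  fin_cases j <;> (simp [gmap, gvecQ, e1, e2, e3, cons_val_five']; push_cast; try ring)

lemma cs_val {q : ℍ[ℝ]} {n1 n2 n3 n4 n5 n6 : ℤ} (h0 : q.re = 0)
    (h1 : q.imI = (((4*n1-n2-n4 : ℤ):ℝ) + ((-n2+n4 : ℤ):ℝ) * Real.sqrt 5)/4)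
    (h2 : q.imJ = (((-2*n2+4*n3-3*n4+2*n6 : ℤ):ℝ) + ((n4-2*n6 : ℤ):ℝ) * Real.sqrt 5)/4)
    (h3 : q.imK = (((-n2-2*n4+4*n5 : ℤ):ℝ) + ((n2 : ℤ):ℝ) * Real.sqrt 5)/4) :
    csNorm q = (((4*n1-n2-n4)^2 + 5*(-n2+n4)^2 + (-2*n2+4*n3-3*n4+2*n6)^2 + 5*(n4-2*n6)^2
        + (-n2-2*n4+4*n5)^2 + 5*n2^2 : ℤ) : ℚ)/16
      + ((2*((4*n1-n2-n4)*(-n2+n4) + (-2*n2+4*n3-3*n4+2*n6)*(n4-2*n6)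
        + (-n2-2*n4+4*n5)*n2) : ℤ) : ℚ)/16 := by
  apply csNorm_eq
  have h5 : Real.sqrt 5 * Real.sqrt 5 = 5 := Real.mul_self_sqrt (by norm_num)
  rw [nsq, h0, h1, h2, h3]
  push_cast
  linear_combination (((-(n2:ℝ)+(n4:ℝ))^2 + ((n4:ℝ)-2*(n6:ℝ))^2 + ((n2:ℝ))^2)/16) * h5

theorem stmt14 :
    ∃ g : ℍ[ℝ] → (Fin 6 → ℝ),
      (∀ p ∈ pureIcosians, ∀ q ∈ pureIcosians, g (p + q) = g p + g q) ∧
      Set.InjOn g pureIcosians ∧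
      g '' pureIcosians = D6 ∧
      ∀ q ∈ pureIcosians, ∑ i, g q i ^ 2 = 2 * (csNorm q : ℝ) := by
  refine ⟨gmap, ?_, ?_, ?_, ?_⟩
  · -- additivity
    intro p hp q hq
    obtain ⟨m1,m2,m3,m4,m5,m6,pf0,pf1,pf2,pf3⟩ := pure_mem_sp hp
    obtain ⟨n1,n2,n3,n4,n5,n6,qf0,qf1,qf2,qf3⟩ := pure_mem_sp hq
    have s1 : (p+q).imI = (((4*(m1+n1)-(m2+n2)-(m4+n4) : ℤ):ℝ)
        + ((-(m2+n2)+(m4+n4) : ℤ):ℝ) * Real.sqrt 5)/4 := by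
      simp only [Quaternion.imI_add, pf1, qf1]; push_cast; ring
    have s2 : (p+q).imJ = (((-2*(m2+n2)+4*(m3+n3)-3*(m4+n4)+2*(m6+n6) : ℤ):ℝ)
        + (((m4+n4)-2*(m6+n6) : ℤ):ℝ) * Real.sqrt 5)/4 := by
      simp only [Quaternion.imJ_add, pf2, qf2]; push_cast; ring
    have s3 : (p+q).imK = (((-(m2+n2)-2*(m4+n4)+4*(m5+n5) : ℤ):ℝ)
        + ((m2+n2 : ℤ):ℝ) * Real.sqrt 5)/4 := by
      simp only [Quaternion.imK_add, pf3, qf3]; push_cast; ring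
    rw [gval pf1 pf2 pf3, gval qf1 qf2 qf3, gval s1 s2 s3]
    funext j
    fin_cases j <;> (simp [cons_val_five', Pi.add_apply]; try push_cast; try ring)
  · -- injectivity
    intro p hp q hq he
    obtain ⟨m1,m2,m3,m4,m5,m6,pf0,pf1,pf2,pf3⟩ := pure_mem_sp hp
    obtain ⟨n1,n2,n3,n4,n5,n6,qf0,qf1,qf2,qf3⟩ := pure_mem_sp hq
    rw [gval pf1 pf2 pf3, gval qf1 qf2 qf3] at he
    have E : ∀ j : Fin 6, (![m1, m2-m1, m3-m2, m4-m3, m5+m6-m4, m6-m5] j : ℤ)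
        = (![n1, n2-n1, n3-n2, n4-n3, n5+n6-n4, n6-n5] j : ℤ) := by
      intro j; exact_mod_cast congrFun he j
    have e0 := E 0; have e1 := E 1; have e2 := E 2
    have e3 := E 3; have e4 := E 4; have e5 := E 5
    simp only [Matrix.cons_val_zero, Matrix.cons_val_one, Matrix.head_cons,
      Matrix.cons_val_two, Matrix.tail_cons, Matrix.cons_val_three, Matrix.cons_val_four,
      cons_val_five'] at e0 e1 e2 e3 e4 e5
    have hm : m1 = n1 ∧ m2 = n2 ∧ m3 = n3 ∧ m4 = n4 ∧ m5 = n5 ∧ m6 = n6 := by omega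
    obtain ⟨rfl,rfl,rfl,rfl,rfl,rfl⟩ := hm
    ext : 1
    · rw [pf0, qf0]
    · rw [pf1, qf1]
    · rw [pf2, qf2]
    · rw [pf3, qf3]
  · -- image is D6
    ext d
    constructor
    · rintro ⟨q, hq, rfl⟩
      obtain ⟨n1,n2,n3,n4,n5,n6,f0,f1,f2,f3⟩ := pure_mem_sp hq
      rw [gval f1 f2 f3]
      constructor
      · intro i; exact ⟨_, rfl⟩
      · refine ⟨n6, ?_⟩
        rw [Fin.sum_univ_six]
        simp [cons_val_five']
        push_cast
        ring
    · rintro ⟨hint, m, hsum⟩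
      choose z hz using hint
      have hzsum : z 0 + z 1 + z 2 + z 3 + z 4 + z 5 = 2*m := by
        have hr : ((z 0 + z 1 + z 2 + z 3 + z 4 + z 5 : ℤ) : ℝ) = ((2*m : ℤ):ℝ) := by
          push_cast
          rw [← hz 0, ← hz 1, ← hz 2, ← hz 3, ← hz 4, ← hz 5]
          rw [Fin.sum_univ_six] at hsum
          linarith
        exact_mod_cast hr
      refine ⟨(⟨0,
        (((4*(z 0)-(z 0 + z 1)-(z 0 + z 1 + z 2 + z 3) : ℤ):ℝ)
          + ((-(z 0 + z 1)+(z 0 + z 1 + z 2 + z 3) : ℤ):ℝ) * Real.sqrt 5)/4,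
        (((-2*(z 0 + z 1)+4*(z 0 + z 1 + z 2)-3*(z 0 + z 1 + z 2 + z 3)+2*m : ℤ):ℝ)
          + (((z 0 + z 1 + z 2 + z 3)-2*m : ℤ):ℝ) * Real.sqrt 5)/4,
        (((-(z 0 + z 1)-2*(z 0 + z 1 + z 2 + z 3)+4*(m - z 5) : ℤ):ℝ)
          + ((z 0 + z 1 : ℤ):ℝ) * Real.sqrt 5)/4⟩ : ℍ[ℝ]),
        sp_mem_pure ⟨z 0, z 0 + z 1, z 0 + z 1 + z 2, z 0 + z 1 + z 2 + z 3, m - z 5, m,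
          rfl, rfl, rfl, rfl⟩, ?_⟩
      erw [gval rfl rfl rfl]
      funext j
      fin_cases j <;> (simp [hz, cons_val_five']; try (norm_cast; omega))
  · -- norm
    intro q hq
    obtain ⟨n1,n2,n3,n4,n5,n6,f0,f1,f2,f3⟩ := pure_mem_sp hq
    rw [gval f1 f2 f3, cs_val f0 f1 f2 f3, Fin.sum_univ_six]
    simp only [Matrix.cons_val_zero, Matrix.cons_val_one, Matrix.head_cons,
      Matrix.cons_val_two, Matrix.tail_cons, Matrix.cons_val_three, Matrix.cons_val_four,
      cons_val_five']
    push_cast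
    ring
end
end
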